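/- Let 0 < r < 1, let W₀ be a CDF on [r,1] (continuous, strictly increasing, W₀(r)=0, W₀(1)=1), and let β₀(x) = ∫_r^1 e^{−xτ}dW₀(τ). Then for all x, y ≥ 0: β₀(x+y) − β₀(x)·β₀(y) ≤ (e^{−rx} − e^{−x})·(e^{−ry} − e^{−y})/4. -/

import Mathlib

open MeasureTheory Set

lemma key_ineq (u v α β c : ℝ) (hu0 : 0 ≤ u) (hv0 : 0 ≤ v) (huα : u ≤ α) (hvβ : v ≤ β)
    (h1 : c ≤ β * u - u * v) (h2 : c ≤ α * v - u * v) : c ≤ α * β / 4 := by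
  have hβ0 : 0 ≤ β := le_trans hv0 hvβ
  have hα0 : 0 ≤ α := le_trans hu0 huα
  rcases le_total (β * u) (α * v) with h | h
  · rcases eq_or_lt_of_le hα0 with hα | hα
    · have hu : u = 0 := le_antisymm (by linarith) hu0
      have : c ≤ 0 := by nlinarith
      nlinarith
    · refine h1.trans ?_
      nlinarith [mul_nonneg hβ0 (sq_nonneg (α - 2*u)), mul_nonneg hu0 (sub_nonneg.2 h)]
  · rcases eq_or_lt_of_le hβ0 with hβ | hβ
    · have hv : v = 0 := le_antisymm (by linarith) hv0
      have : c ≤ 0 := by nlinarith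
      nlinarith
    · refine h2.trans ?_
      nlinarith [mul_nonneg hα0 (sq_nonneg (β - 2*v)), mul_nonneg hv0 (sub_nonneg.2 h)]

theorem stmt_18 (r : ℝ) (hr0 : 0 < r) (hr1 : r < 1) (w : StieltjesFunction ℝ)
    (hwc : Continuous w) (hwm : StrictMonoOn w (Set.Icc r 1))
    (hwr : w r = 0) (hw1 : w 1 = 1) :
    ∀ x y : ℝ, 0 ≤ x → 0 ≤ y →
      (∫ τ in Set.Icc r 1, Real.exp (-(x + y) * τ) ∂w.measure) -
          (∫ τ in Set.Icc r 1, Real.exp (-x * τ) ∂w.measure) *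
            (∫ τ in Set.Icc r 1, Real.exp (-y * τ) ∂w.measure) ≤
        (Real.exp (-r * x) - Real.exp (-x)) *
          (Real.exp (-r * y) - Real.exp (-y)) / 4 := by
  intro x y hx hy
  set μ := w.measure.restrict (Set.Icc r 1) with hμdef
  have hmass : μ Set.univ = 1 := by
    rw [hμdef, Measure.restrict_apply_univ, StieltjesFunction.measure_Icc,
      leftLim_eq_of_tendsto
        ((hwc.tendsto r).mono_left nhdsWithin_le_nhds), hwr, hw1]
    simp
  have hprob : IsProbabilityMeasure μ := ⟨hmass⟩
  have hI : ∀ h : ℝ → ℝ, Continuous h → Integrable h μ := fun h hh => hh.integrableOn_Icc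
  set a : ℝ := Real.exp (-x) with ha
  set b : ℝ := Real.exp (-y) with hb
  set α : ℝ := Real.exp (-r*x) - Real.exp (-x) with hα
  set β : ℝ := Real.exp (-r*y) - Real.exp (-y) with hβ
  set F : ℝ → ℝ := fun τ => Real.exp (-x*τ) - a with hF
  set G : ℝ → ℝ := fun τ => Real.exp (-y*τ) - b with hG
  have hcF : Continuous F := by fun_prop
  have hcG : Continuous G := by fun_prop
  have hFnn : ∀ τ ∈ Set.Icc r 1, 0 ≤ F τ := by
    intro τ hτ
    simp only [hF, sub_nonneg, ha, Real.exp_le_exp]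
    nlinarith [hτ.2]
  have hGnn : ∀ τ ∈ Set.Icc r 1, 0 ≤ G τ := by
    intro τ hτ
    simp only [hG, sub_nonneg, hb, Real.exp_le_exp]
    nlinarith [hτ.2]
  have hFle : ∀ τ ∈ Set.Icc r 1, F τ ≤ α := by
    intro τ hτ
    simp only [hF, hα, ha, sub_le_sub_iff_right, Real.exp_le_exp]
    nlinarith [hτ.1]
  have hGle : ∀ τ ∈ Set.Icc r 1, G τ ≤ β := by
    intro τ hτ
    simp only [hG, hβ, hb, sub_le_sub_iff_right, Real.exp_le_exp]
    nlinarith [hτ.1]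
  -- abbreviations for integrals
  set u : ℝ := ∫ τ, F τ ∂μ with hu
  set v : ℝ := ∫ τ, G τ ∂μ with hv
  have hu0 : 0 ≤ u := setIntegral_nonneg measurableSet_Icc hFnn
  have hv0 : 0 ≤ v := setIntegral_nonneg measurableSet_Icc hGnn
  have huα : u ≤ α := by
    have := setIntegral_mono_on (hI F hcF) (hI _ continuous_const) measurableSet_Icc hFle
    simpa [integral_const] using this
  have hvβ : v ≤ β := by
    have := setIntegral_mono_on (hI G hcG) (hI _ continuous_const) measurableSet_Icc hGle
    simpa [integral_const] using this
  -- integral identities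
  have hfx : (∫ τ in Set.Icc r 1, Real.exp (-x * τ) ∂w.measure) = u + a := by
    rw [hu]
    rw [show (fun τ => Real.exp (-x*τ)) = fun τ => F τ + a from funext fun τ => by simp [hF]]
    rw [integral_add (hI F hcF) (hI _ continuous_const), integral_const]
    simp
  have hfy : (∫ τ in Set.Icc r 1, Real.exp (-y * τ) ∂w.measure) = v + b := by
    rw [hv]
    rw [show (fun τ => Real.exp (-y*τ)) = fun τ => G τ + b from funext fun τ => by simp [hG]]
    rw [integral_add (hI G hcG) (hI _ continuous_const), integral_const]
    simp
  have hfxy : (∫ τ in Set.Icc r 1, Real.exp (-(x+y) * τ) ∂w.measure)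
      = (∫ τ, F τ * G τ ∂μ) + a * v + b * u + a * b := by
    rw [show (fun τ => Real.exp (-(x+y)*τ)) = fun τ => F τ * G τ + a * G τ + b * F τ + a*b
        from funext fun τ => by
      simp only [hF, hG]
      rw [show -(x+y)*τ = (-x*τ) + (-y*τ) by ring, Real.exp_add]; ring]
    rw [integral_add (hI (fun τ => F τ * G τ + a * G τ + b * F τ) (by fun_prop))
        (hI _ continuous_const),
      integral_add (hI (fun τ => F τ * G τ + a * G τ) (by fun_prop))
        (hI (fun τ => b * F τ) (by fun_prop)),
      integral_add (hI (fun τ => F τ * G τ) (by fun_prop)) (hI (fun τ => a * G τ) (by fun_prop)),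
      integral_const_mul, integral_const_mul, integral_const]
    simp [hu, hv]
  have hFGle1 : (∫ τ, F τ * G τ ∂μ) ≤ β * u := by
    have : (∫ τ in Set.Icc r 1, F τ * G τ ∂w.measure)
        ≤ ∫ τ in Set.Icc r 1, β * F τ ∂w.measure := by
      refine setIntegral_mono_on (hI _ (hcF.mul hcG)) ((hI F hcF).const_mul β)
        measurableSet_Icc fun τ hτ => ?_
      calc F τ * G τ ≤ F τ * β := mul_le_mul_of_nonneg_left (hGle τ hτ) (hFnn τ hτ)
        _ = β * F τ := mul_comm _ _
    rwa [integral_const_mul] at this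
  have hFGle2 : (∫ τ, F τ * G τ ∂μ) ≤ α * v := by
    have : (∫ τ in Set.Icc r 1, F τ * G τ ∂w.measure)
        ≤ ∫ τ in Set.Icc r 1, α * G τ ∂w.measure := by
      refine setIntegral_mono_on (hI _ (hcF.mul hcG)) ((hI G hcG).const_mul α)
        measurableSet_Icc fun τ hτ => ?_
      exact mul_le_mul_of_nonneg_right (hFle τ hτ) (hGnn τ hτ)
    rwa [integral_const_mul] at this
  have key := key_ineq u v α β ((∫ τ, F τ * G τ ∂μ) - u * v) hu0 hv0 huα hvβ
    (by linarith) (by linarith)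
  rw [hfx, hfy, hfxy]
  nlinarith [key]
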